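/- Let m_i = (w_i, v_i) be pairs of integers for i = 1,...,n and B = (w, v). Then there exists a subset S of {1,...,n} with \sum_{i\in S} w_i = w and \sum_{i\in S} v_i = v if and only if there exists a subset S with \sum_{i\in S} (w_i + D v_i) = w + D v, where D = 1 + \sum_i (|w_i| + |v_i|) + |w| + |v|. -/
import Mathlib


theorem stmt_17 (n : ℕ) (w v : Fin n → ℤ) (W V : ℤ)
    (D : ℤ) (hD : D = 1 + (∑ i, (|w i| + |v i|)) + |W| + |V|) :
    (∃ S : Finset (Fin n), (∑ i ∈ S, w i) = W ∧ (∑ i ∈ S, v i) = V) ↔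
      ∃ S : Finset (Fin n), (∑ i ∈ S, (w i + D * v i)) = W + D * V := by
  have hsum : ∑ i, |w i| ≤ ∑ i, (|w i| + |v i|) :=
    Finset.sum_le_sum fun i _ => le_add_of_nonneg_right (abs_nonneg _)
  have hDpos : 0 < D := by
    have h0 : (0:ℤ) ≤ ∑ i, (|w i| + |v i|) :=
      Finset.sum_nonneg fun i _ => by positivity
    have := abs_nonneg W
    have := abs_nonneg V
    omega
  constructor
  · rintro ⟨S, hw, hv⟩
    refine ⟨S, ?_⟩
    rw [Finset.sum_add_distrib, hw, ← Finset.mul_sum, hv]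
  · rintro ⟨S, h⟩
    rw [Finset.sum_add_distrib, ← Finset.mul_sum] at h
    set A := ∑ i ∈ S, w i with hA
    set B := ∑ i ∈ S, v i with hB
    have habsA : |A| ≤ ∑ i, |w i| := by
      calc |A| ≤ ∑ i ∈ S, |w i| := Finset.abs_sum_le_sum_abs _ _
        _ ≤ ∑ i, |w i| := Finset.sum_le_sum_of_subset_of_nonneg
            (Finset.subset_univ S) (fun i _ _ => abs_nonneg _)
    have key : A - W = D * (V - B) := by linear_combination h
    have hlt : |A - W| < D := by
      have h3 : |A - W| ≤ |A| + |W| := by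
        rw [sub_eq_add_neg]
        exact (abs_add_le A (-W)).trans_eq (by rw [abs_neg])
      have := abs_nonneg V
      linarith
    have hVB : V - B = 0 := by
      by_contra hne
      have h1 : 1 ≤ |V - B| := Int.one_le_abs (by omega)
      rw [key, abs_mul, abs_of_pos hDpos] at hlt
      nlinarith [mul_le_mul_of_nonneg_left h1 hDpos.le]
    have hV : B = V := by omega
    rw [hVB, mul_zero] at key
    exact ⟨S, by omega, hV⟩
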